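/- Let p > l. Then: (i) for all y ∈ ℝ^{d2} and z, z' ∈ ℝ^{d1}, ‖x*(y,z) − x*(y,z')‖ ≤ (p/(p−l))·‖z − z'‖; (ii) for all y, y' ∈ ℝ^{d2} and z ∈ ℝ^{d1}, ‖x*(y,z) − x*(y',z)‖ ≤ ((l+p)/(p−l))·‖y − y'‖; (iii) if Y ⊆ ℝ^{d2} is nonempty, convex and compact and x*(z) denotes the unique minimizer over ℝ^{d1} of the (p−l)-strongly convex function x ↦ max_{y∈Y} f̂(x,y,z), then for all z, z' ∈ ℝ^{d1}, ‖x*(z) − x*(z')‖ ≤ (p/(p−l))·‖z − z'‖. -/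

import Mathlib

open Set Metric
open scoped RealInnerProductSpace

noncomputable def gradx {d1 d2 : ℕ}
    (f : EuclideanSpace ℝ (Fin d1) → EuclideanSpace ℝ (Fin d2) → ℝ)
    (x : EuclideanSpace ℝ (Fin d1)) (y : EuclideanSpace ℝ (Fin d2)) :
    EuclideanSpace ℝ (Fin d1) :=
  gradient (fun x' => f x' y) x

noncomputable def grady {d1 d2 : ℕ}
    (f : EuclideanSpace ℝ (Fin d1) → EuclideanSpace ℝ (Fin d2) → ℝ)
    (x : EuclideanSpace ℝ (Fin d1)) (y : EuclideanSpace ℝ (Fin d2)) :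
    EuclideanSpace ℝ (Fin d2) :=
  gradient (fun y' => f x y') y

/-- `f` is differentiable and `l`-smooth: the gradient is `l`-Lipschitz with respect to the
Euclidean norm on the product space (stated in squared form). -/
def IsLSmooth {d1 d2 : ℕ} (l : ℝ)
    (f : EuclideanSpace ℝ (Fin d1) → EuclideanSpace ℝ (Fin d2) → ℝ) : Prop :=
  Differentiable ℝ (fun w : EuclideanSpace ℝ (Fin d1) × EuclideanSpace ℝ (Fin d2) => f w.1 w.2) ∧
  ∀ x₁ x₂ y₁ y₂,
    ‖gradx f x₁ y₁ - gradx f x₂ y₂‖ ^ 2 + ‖grady f x₁ y₁ - grady f x₂ y₂‖ ^ 2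
      ≤ l ^ 2 * (‖x₁ - x₂‖ ^ 2 + ‖y₁ - y₂‖ ^ 2)

/-- `f̂(x, y, z) = f(x, y) + (p/2)‖x − z‖²`. -/
noncomputable def fhat {d1 d2 : ℕ}
    (f : EuclideanSpace ℝ (Fin d1) → EuclideanSpace ℝ (Fin d2) → ℝ) (p : ℝ)
    (x : EuclideanSpace ℝ (Fin d1)) (y : EuclideanSpace ℝ (Fin d2))
    (z : EuclideanSpace ℝ (Fin d1)) : ℝ :=
  f x y + p / 2 * ‖x - z‖ ^ 2


open Set Metric Filter
open scoped RealInnerProductSpace Topology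
set_option linter.unusedSectionVars false
set_option maxHeartbeats 1000000

section Helpers
variable {E : Type*} [NormedAddCommGroup E] [InnerProductSpace ℝ E] [CompleteSpace E]

lemma comb_norm_sq (a b : E) (t : ℝ) :
    ‖a + t • (b - a)‖ ^ 2 = (1 - t) * ‖a‖ ^ 2 + t * ‖b‖ ^ 2 - t * (1 - t) * ‖a - b‖ ^ 2 := by
  simp only [← real_inner_self_eq_norm_sq, inner_add_add_self, inner_sub_sub_self,
    real_inner_smul_left, real_inner_smul_right, inner_sub_left, inner_sub_right]
  ring_nf

lemma four_norm_identity (u v w w' : E) :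
    ‖v - w‖ ^ 2 - ‖v - w'‖ ^ 2 - ‖u - w‖ ^ 2 + ‖u - w'‖ ^ 2 = 2 * ⟪v - u, w' - w⟫ := by
  simp only [← real_inner_self_eq_norm_sq, inner_sub_sub_self, inner_sub_left, inner_sub_right]
  ring_nf
  rw [real_inner_comm w v, real_inner_comm w' v, real_inner_comm w u, real_inner_comm w' u]
  ring

lemma hasGradientAt_half_norm_sq (c : ℝ) (z x : E) :
    HasGradientAt (fun x : E => c / 2 * ‖x - z‖ ^ 2) (c • (x - z)) x := by
  rw [hasGradientAt_iff_hasFDerivAt]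
  have h1 : HasFDerivAt (fun x : E => x - z) (ContinuousLinearMap.id ℝ E) x :=
    (hasFDerivAt_id x).sub_const z
  have h2 := (h1.inner ℝ h1).const_mul (c / 2)
  convert h2 using 1
  · rfl
  · funext u
    rw [real_inner_self_eq_norm_sq]
  · ext v
    simp [fderivInnerCLM_apply, InnerProductSpace.toDual_apply_apply, real_inner_smul_left,
      real_inner_comm]
    rw [inner_sub_right, real_inner_comm z v, real_inner_comm v x]
    ring

lemma hasGradientAt_add' {g₁ g₂ : E → ℝ} {G₁ G₂ x : E}
    (h₁ : HasGradientAt g₁ G₁ x) (h₂ : HasGradientAt g₂ G₂ x) :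
    HasGradientAt (fun x => g₁ x + g₂ x) (G₁ + G₂) x := by
  rw [hasGradientAt_iff_hasFDerivAt] at *
  rw [map_add]; exact h₁.add h₂

lemma hasGradientAt_sub' {g₁ g₂ : E → ℝ} {G₁ G₂ x : E}
    (h₁ : HasGradientAt g₁ G₁ x) (h₂ : HasGradientAt g₂ G₂ x) :
    HasGradientAt (fun x => g₁ x - g₂ x) (G₁ - G₂) x := by
  rw [hasGradientAt_iff_hasFDerivAt] at *
  rw [map_sub]; exact h₁.sub h₂

lemma convex_of_monotone_grad {g : E → ℝ} {G : E → E}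
    (hg : ∀ x, HasGradientAt g (G x) x)
    (hm : ∀ x y : E, 0 ≤ ⟪G x - G y, x - y⟫) (a b : E) {t : ℝ}
    (ht0 : 0 ≤ t) (ht1 : t ≤ 1) :
    g (a + t • (b - a)) ≤ (1 - t) * g a + t * g b := by
  rcases eq_or_lt_of_le ht0 with h0 | h0
  · simp [← h0]
  rcases eq_or_lt_of_le ht1 with h1 | h1
  · simp [h1]
  set φ : ℝ → ℝ := fun s => g (a + s • (b - a)) with hφdef
  set ψ : ℝ → ℝ := fun s => ⟪G (a + s • (b - a)), b - a⟫ with hψdef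
  have hφ : ∀ s : ℝ, HasDerivAt φ (ψ s) s := by
    intro s
    have hline : HasDerivAt (fun s : ℝ => a + s • (b - a)) (b - a) s := by
      simpa using ((hasDerivAt_id s).smul_const (b - a)).const_add a
    have := ((hg (a + s • (b - a))).hasFDerivAt.comp_hasDerivAt s hline)
    simp only [InnerProductSpace.toDual_apply_apply] at this
    exact this
  have hψmono : ∀ s s' : ℝ, s ≤ s' → ψ s ≤ ψ s' := by
    intro s s' hss
    rcases eq_or_lt_of_le hss with h | h
    · rw [h]
    have key : (s' - s) * (ψ s' - ψ s) ≥ 0 := by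
      have := hm (a + s' • (b - a)) (a + s • (b - a))
      have heq : (a + s' • (b - a)) - (a + s • (b - a)) = (s' - s) • (b - a) := by
        rw [sub_smul]; abel
      rw [heq, inner_sub_left, real_inner_smul_right, real_inner_smul_right] at this
      simp only [hψdef]
      nlinarith
    nlinarith [sub_pos.mpr h]
  have hcont : ∀ u v : ℝ, ContinuousOn φ (Icc u v) :=
    fun u v => (Differentiable.continuous (fun s => (hφ s).differentiableAt)).continuousOn
  obtain ⟨c₁, hc₁, hc₁eq⟩ := exists_hasDerivAt_eq_slope φ ψ h0 (hcont 0 t) (fun x _ => hφ x)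
  obtain ⟨c₂, hc₂, hc₂eq⟩ := exists_hasDerivAt_eq_slope φ ψ h1 (hcont t 1) (fun x _ => hφ x)
  have hle : ψ c₁ ≤ ψ c₂ := hψmono _ _ (le_of_lt (hc₁.2.trans hc₂.1))
  rw [hc₁eq] at hle; rw [hc₂eq] at hle
  have e0 : φ 0 = g a := by simp [hφdef]
  have e1 : φ 1 = g b := by simp [hφdef]
  have ht' : (0:ℝ) < 1 - t := by linarith
  rw [div_le_div_iff₀ (by simpa using h0) (by simpa using ht')] at hle
  have : g (a + t • (b - a)) = φ t := rfl
  rw [this]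
  nlinarith [hle, e0, e1]

lemma quad_growth {g : E → ℝ} {μ : ℝ}
    (hsc : ∀ a b : E, ∀ t : ℝ, 0 ≤ t → t ≤ 1 →
      g (a + t • (b - a)) ≤ (1 - t) * g a + t * g b - μ / 2 * t * (1 - t) * ‖a - b‖ ^ 2)
    {x₀ : E} (hmin : ∀ x, g x₀ ≤ g x) (x : E) :
    g x₀ + μ / 2 * ‖x - x₀‖ ^ 2 ≤ g x := by
  have key : ∀ t ∈ Ioo (0:ℝ) 1, g x₀ + μ / 2 * (1 - t) * ‖x₀ - x‖ ^ 2 ≤ g x := by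
    rintro t ⟨ht0, ht1⟩
    have h1 := hsc x₀ x t ht0.le ht1.le
    have h2 := hmin (x₀ + t • (x - x₀))
    nlinarith
  have hev : ∀ᶠ t in 𝓝[>] (0:ℝ), g x₀ + μ / 2 * (1 - t) * ‖x₀ - x‖ ^ 2 ≤ g x := by
    filter_upwards [Ioo_mem_nhdsGT_of_mem (by simp : (0:ℝ) ∈ Ico (0:ℝ) 1)] with t ht
    exact key t ht
  have htend : Tendsto (fun t : ℝ => g x₀ + μ / 2 * (1 - t) * ‖x₀ - x‖ ^ 2) (𝓝[>] (0:ℝ))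
      (𝓝 (g x₀ + μ / 2 * ‖x₀ - x‖ ^ 2)) := by
    have hct : ContinuousAt (fun t : ℝ => g x₀ + μ / 2 * (1 - t) * ‖x₀ - x‖ ^ 2) 0 := by
      fun_prop
    have h := hct.tendsto.mono_left (nhdsWithin_le_nhds (s := Ioi (0:ℝ)))
    simpa using h
  have := le_of_tendsto htend hev
  rwa [norm_sub_rev x₀ x] at this

lemma sSup_image_add_const {F : Type*} [TopologicalSpace F] {Y : Set F} (hYne : Y.Nonempty)
    (hYcomp : IsCompact Y) {h : F → ℝ} (hc : ContinuousOn h Y) (c : ℝ) :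
    sSup ((fun y => h y + c) '' Y) = sSup (h '' Y) + c := by
  obtain ⟨y₀, hy₀Y, hy₀⟩ := hYcomp.exists_isMaxOn hYne hc
  have h1 : IsGreatest (h '' Y) (h y₀) :=
    ⟨mem_image_of_mem _ hy₀Y, by rintro r ⟨y, hy, rfl⟩; exact hy₀ hy⟩
  have h2 : IsGreatest ((fun y => h y + c) '' Y) (h y₀ + c) :=
    ⟨mem_image_of_mem _ hy₀Y, by rintro r ⟨y, hy, rfl⟩; exact add_le_add_left (hy₀ hy) c⟩
  rw [h1.csSup_eq, h2.csSup_eq]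

end Helpers


/-- Lemma on Lipschitz continuity of the minimizers `x*`.
If `p > l`, then `x*(y, ·)` is `p/(p−l)`-Lipschitz, `x*(·, z)` is `(l+p)/(p−l)`-Lipschitz,
and the minimizer `x*(·)` of `x ↦ max_{y ∈ Y} f̂(x, y, z)` is `p/(p−l)`-Lipschitz. -/
theorem statement0 {d1 d2 : ℕ} (l p : ℝ) (hl : 0 < l) (hpl : l < p)
    (f : EuclideanSpace ℝ (Fin d1) → EuclideanSpace ℝ (Fin d2) → ℝ)
    (hf : IsLSmooth l f)
    -- `x*(y, z)`: the (unique) minimizer of `x ↦ f̂(x, y, z)` over `ℝ^{d1}`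
    (xstar : EuclideanSpace ℝ (Fin d2) → EuclideanSpace ℝ (Fin d1) → EuclideanSpace ℝ (Fin d1))
    (hxstar : ∀ y z x, fhat f p (xstar y z) y z ≤ fhat f p x y z)
    -- `Y` is nonempty, convex and compact
    (Y : Set (EuclideanSpace ℝ (Fin d2))) (hYne : Y.Nonempty) (hYconv : Convex ℝ Y)
    (hYcomp : IsCompact Y)
    -- `x*(z)`: the (unique) minimizer of `x ↦ max_{y ∈ Y} f̂(x, y, z)` over `ℝ^{d1}`
    (xstarz : EuclideanSpace ℝ (Fin d1) → EuclideanSpace ℝ (Fin d1))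
    (hxstarz : ∀ z x, sSup ((fun y => fhat f p (xstarz z) y z) '' Y)
        ≤ sSup ((fun y => fhat f p x y z) '' Y)) :
    (∀ (y : EuclideanSpace ℝ (Fin d2)) (z z' : EuclideanSpace ℝ (Fin d1)),
        ‖xstar y z - xstar y z'‖ ≤ p / (p - l) * ‖z - z'‖) ∧
    (∀ (y y' : EuclideanSpace ℝ (Fin d2)) (z : EuclideanSpace ℝ (Fin d1)),
        ‖xstar y z - xstar y' z‖ ≤ (l + p) / (p - l) * ‖y - y'‖) ∧
    (∀ z z' : EuclideanSpace ℝ (Fin d1),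
        ‖xstarz z - xstarz z'‖ ≤ p / (p - l) * ‖z - z'‖) := by
  obtain ⟨hdiff, hlip⟩ := hf
  have hμ : (0:ℝ) < p - l := sub_pos.mpr hpl
  -- differentiability of x ↦ f x y
  have hdx : ∀ (y : EuclideanSpace ℝ (Fin d2)) (x : EuclideanSpace ℝ (Fin d1)),
      HasGradientAt (fun x' => f x' y) (gradx f x y) x := by
    intro y x
    have hd : DifferentiableAt ℝ (fun x' => f x' y) x := by
      have := (hdiff (x, y)).comp x
        ((differentiableAt_id (𝕜 := ℝ) (x := x)).prodMk (differentiableAt_const (𝕜 := ℝ) y))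
      exact this
    exact hd.hasGradientAt
  -- Lipschitz bounds for gradx
  have hLxx : ∀ (x₁ x₂ : EuclideanSpace ℝ (Fin d1)) (y : EuclideanSpace ℝ (Fin d2)),
      ‖gradx f x₁ y - gradx f x₂ y‖ ≤ l * ‖x₁ - x₂‖ := by
    intro x₁ x₂ y
    have h := hlip x₁ x₂ y y
    have h2 : ‖gradx f x₁ y - gradx f x₂ y‖ ^ 2 ≤ (l * ‖x₁ - x₂‖) ^ 2 := by
      have := sq_nonneg ‖grady f x₁ y - grady f x₂ y‖
      simp only [sub_self, norm_zero] at h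
      nlinarith
    have h3 := Real.sqrt_le_sqrt h2
    rwa [Real.sqrt_sq (norm_nonneg _), Real.sqrt_sq (by positivity)] at h3
  have hLxy : ∀ (x₁ x₂ : EuclideanSpace ℝ (Fin d1)) (y₁ y₂ : EuclideanSpace ℝ (Fin d2)),
      ‖gradx f x₁ y₁ - gradx f x₂ y₂‖ ≤ l * ‖x₁ - x₂‖ + l * ‖y₁ - y₂‖ := by
    intro x₁ x₂ y₁ y₂
    have h := hlip x₁ x₂ y₁ y₂
    have h2 : ‖gradx f x₁ y₁ - gradx f x₂ y₂‖ ^ 2 ≤ (l * ‖x₁ - x₂‖ + l * ‖y₁ - y₂‖) ^ 2 := by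
      nlinarith [sq_nonneg ‖grady f x₁ y₁ - grady f x₂ y₂‖,
        mul_nonneg (norm_nonneg (x₁ - x₂)) (norm_nonneg (y₁ - y₂)), sq_nonneg l]
    have h3 := Real.sqrt_le_sqrt h2
    rwa [Real.sqrt_sq (norm_nonneg _), Real.sqrt_sq (by positivity)] at h3
  -- gradient of fhat
  have hg_fhat : ∀ (y : EuclideanSpace ℝ (Fin d2)) (z x : EuclideanSpace ℝ (Fin d1)),
      HasGradientAt (fun x => fhat f p x y z) (gradx f x y + p • (x - z)) x := by
    intro y z x
    exact hasGradientAt_add' (hdx y x) (hasGradientAt_half_norm_sq p z x)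
  -- minimizers have zero gradient
  have hgrad0 : ∀ (y : EuclideanSpace ℝ (Fin d2)) (z : EuclideanSpace ℝ (Fin d1)),
      gradx f (xstar y z) y + p • (xstar y z - z) = 0 := by
    intro y z
    have hmin : IsLocalMin (fun x => fhat f p x y z) (xstar y z) :=
      Filter.Eventually.of_forall (fun x => hxstar y z x)
    have h0 := hmin.hasFDerivAt_eq_zero (hg_fhat y z (xstar y z)).hasFDerivAt
    have := congrArg (InnerProductSpace.toDual ℝ (EuclideanSpace ℝ (Fin d1))).symm h0
    simpa using this
  refine ⟨?_, ?_, ?_⟩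
  · -- part (i)
    intro y z z'
    set x₁ := xstar y z with hx₁
    set x₂ := xstar y z' with hx₂
    have e₁ : gradx f x₁ y = -(p • (x₁ - z)) := eq_neg_of_add_eq_zero_left (hgrad0 y z)
    have e₂ : gradx f x₂ y = -(p • (x₂ - z')) := eq_neg_of_add_eq_zero_left (hgrad0 y z')
    have heq : gradx f x₁ y - gradx f x₂ y = -(p • (x₁ - x₂)) + p • (z - z') := by
      rw [e₁, e₂]; module
    have hinner : ⟪gradx f x₁ y - gradx f x₂ y, x₁ - x₂⟫ =
        -(p * ‖x₁ - x₂‖ ^ 2) + p * ⟪z - z', x₁ - x₂⟫ := by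
      rw [heq, inner_add_left, inner_neg_left, real_inner_smul_left, real_inner_smul_left,
        real_inner_self_eq_norm_sq]
    have hb1 := abs_real_inner_le_norm (gradx f x₁ y - gradx f x₂ y) (x₁ - x₂)
    have hb2 := real_inner_le_norm (z - z') (x₁ - x₂)
    have hL := hLxx x₁ x₂ y
    have hkey : (p - l) * ‖x₁ - x₂‖ ^ 2 ≤ p * (‖z - z'‖ * ‖x₁ - x₂‖) := by
      have habs := neg_abs_le ⟪gradx f x₁ y - gradx f x₂ y, x₁ - x₂⟫
      nlinarith [norm_nonneg (x₁ - x₂), norm_nonneg (z - z'), hl.le, hpl.le]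
    rcases eq_or_lt_of_le (norm_nonneg (x₁ - x₂)) with h0 | h0
    · rw [← h0]
      exact mul_nonneg (div_nonneg (by linarith) hμ.le) (norm_nonneg _)
    · have hd2 : (p - l) * ‖x₁ - x₂‖ ≤ p * ‖z - z'‖ :=
        le_of_mul_le_mul_right (by nlinarith [hkey]) h0
      rw [div_mul_eq_mul_div, le_div_iff₀ hμ]
      nlinarith
  · -- part (ii)
    intro y y' z
    set x₁ := xstar y z with hx₁
    set x₂ := xstar y' z with hx₂
    have e₁ : gradx f x₁ y = -(p • (x₁ - z)) := eq_neg_of_add_eq_zero_left (hgrad0 y z)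
    have e₂ : gradx f x₂ y' = -(p • (x₂ - z)) := eq_neg_of_add_eq_zero_left (hgrad0 y' z)
    have heq : gradx f x₁ y - gradx f x₂ y' = -(p • (x₁ - x₂)) := by
      rw [e₁, e₂]; module
    have hinner : ⟪gradx f x₁ y - gradx f x₂ y', x₁ - x₂⟫ = -(p * ‖x₁ - x₂‖ ^ 2) := by
      rw [heq, inner_neg_left, real_inner_smul_left, real_inner_self_eq_norm_sq]
    have hb1 := abs_real_inner_le_norm (gradx f x₁ y - gradx f x₂ y') (x₁ - x₂)
    have hL := hLxy x₁ x₂ y y'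
    have hkey : (p - l) * ‖x₁ - x₂‖ ^ 2 ≤ l * (‖y - y'‖ * ‖x₁ - x₂‖) := by
      have habs := neg_abs_le ⟪gradx f x₁ y - gradx f x₂ y', x₁ - x₂⟫
      nlinarith [norm_nonneg (x₁ - x₂), norm_nonneg (y - y'), hl.le, hpl.le]
    rcases eq_or_lt_of_le (norm_nonneg (x₁ - x₂)) with h0 | h0
    · rw [← h0]
      exact mul_nonneg (div_nonneg (by linarith) hμ.le) (norm_nonneg _)
    · have hd2 : (p - l) * ‖x₁ - x₂‖ ≤ l * ‖y - y'‖ :=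
        le_of_mul_le_mul_right (by nlinarith [hkey]) h0
      rw [div_mul_eq_mul_div, le_div_iff₀ hμ]
      nlinarith [mul_nonneg (by linarith : (0:ℝ) ≤ p) (norm_nonneg (y - y'))]
  · -- part (iii)
    intro z z'
    -- continuity in y
    have hcY : ∀ x : EuclideanSpace ℝ (Fin d1), Continuous (fun y => f x y) :=
      fun x => hdiff.continuous.comp (Continuous.prodMk_right x)
    have hcont : ∀ (x zz : EuclideanSpace ℝ (Fin d1)),
        ContinuousOn (fun y => fhat f p x y zz) Y :=
      fun x zz => ((hcY x).add continuous_const).continuousOn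
    have hbdd : ∀ (x zz : EuclideanSpace ℝ (Fin d1)),
        BddAbove ((fun y => fhat f p x y zz) '' Y) :=
      fun x zz => (hYcomp.image_of_continuousOn (hcont x zz)).bddAbove
    have hne : ∀ (x zz : EuclideanSpace ℝ (Fin d1)),
        ((fun y => fhat f p x y zz) '' Y).Nonempty := fun x zz => hYne.image _
    -- per-y strong convexity inequality for fhat
    have hsc : ∀ (zz : EuclideanSpace ℝ (Fin d1)) (y : EuclideanSpace ℝ (Fin d2))
        (a b : EuclideanSpace ℝ (Fin d1)) (t : ℝ), 0 ≤ t → t ≤ 1 →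
        fhat f p (a + t • (b - a)) y zz ≤ (1 - t) * fhat f p a y zz + t * fhat f p b y zz
          - (p - l) / 2 * t * (1 - t) * ‖a - b‖ ^ 2 := by
      intro zz y a b t ht0 ht1
      have hφg : ∀ x, HasGradientAt (fun x => fhat f p x y zz - (p - l) / 2 * ‖x‖ ^ 2)
          (gradx f x y + p • (x - zz) - (p - l) • x) x := by
        intro x
        have h3 : HasGradientAt (fun x : EuclideanSpace ℝ (Fin d1) => (p - l) / 2 * ‖x‖ ^ 2)
            ((p - l) • x) x := by
          have := hasGradientAt_half_norm_sq (p - l) 0 x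
          simpa using this
        exact hasGradientAt_sub' (hg_fhat y zz x) h3
      have hmono : ∀ u v : EuclideanSpace ℝ (Fin d1),
          0 ≤ ⟪(gradx f u y + p • (u - zz) - (p - l) • u) -
              (gradx f v y + p • (v - zz) - (p - l) • v), u - v⟫ := by
        intro u v
        have hexp : (gradx f u y + p • (u - zz) - (p - l) • u) -
            (gradx f v y + p • (v - zz) - (p - l) • v)
            = (gradx f u y - gradx f v y) + l • (u - v) := by module
        rw [hexp, inner_add_left, real_inner_smul_left, real_inner_self_eq_norm_sq]
        have habs := neg_abs_le ⟪gradx f u y - gradx f v y, u - v⟫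
        have hb := abs_real_inner_le_norm (gradx f u y - gradx f v y) (u - v)
        have hL := hLxx u v y
        nlinarith [norm_nonneg (u - v), hl.le]
      have hconv := convex_of_monotone_grad hφg hmono a b ht0 ht1
      have hid := comb_norm_sq a b t
      rw [hid] at hconv
      linarith
    -- strong convexity of the sup function
    have hFsc : ∀ (zz : EuclideanSpace ℝ (Fin d1)) (a b : EuclideanSpace ℝ (Fin d1)) (t : ℝ),
        0 ≤ t → t ≤ 1 →
        sSup ((fun y => fhat f p (a + t • (b - a)) y zz) '' Y)
          ≤ (1 - t) * sSup ((fun y => fhat f p a y zz) '' Y)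
            + t * sSup ((fun y => fhat f p b y zz) '' Y)
            - (p - l) / 2 * t * (1 - t) * ‖a - b‖ ^ 2 := by
      intro zz a b t ht0 ht1
      apply csSup_le (hne _ zz)
      rintro r ⟨y, hy, rfl⟩
      have h1 : fhat f p a y zz ≤ sSup ((fun y => fhat f p a y zz) '' Y) :=
        le_csSup (hbdd a zz) (mem_image_of_mem _ hy)
      have h2 : fhat f p b y zz ≤ sSup ((fun y => fhat f p b y zz) '' Y) :=
        le_csSup (hbdd b zz) (mem_image_of_mem _ hy)
      have h3 := hsc zz y a b t ht0 ht1
      have h4 : (1 - t) * fhat f p a y zz ≤ (1 - t) * sSup ((fun y => fhat f p a y zz) '' Y) :=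
        mul_le_mul_of_nonneg_left h1 (by linarith)
      have h5 : t * fhat f p b y zz ≤ t * sSup ((fun y => fhat f p b y zz) '' Y) :=
        mul_le_mul_of_nonneg_left h2 ht0
      linarith
    -- quadratic growth at the minimizer
    have hqg : ∀ (zz : EuclideanSpace ℝ (Fin d1)) (x : EuclideanSpace ℝ (Fin d1)),
        sSup ((fun y => fhat f p (xstarz zz) y zz) '' Y)
          + (p - l) / 2 * ‖x - xstarz zz‖ ^ 2
          ≤ sSup ((fun y => fhat f p x y zz) '' Y) := by
      intro zz
      exact quad_growth (g := fun x => sSup ((fun y => fhat f p x y zz) '' Y))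
        (fun a b t ht0 ht1 => hFsc zz a b t ht0 ht1) (hxstarz zz)
    -- shift identity between the two sup functions
    have hshift : ∀ x : EuclideanSpace ℝ (Fin d1),
        sSup ((fun y => fhat f p x y z) '' Y)
          = sSup ((fun y => fhat f p x y z') '' Y)
            + (p / 2 * ‖x - z‖ ^ 2 - p / 2 * ‖x - z'‖ ^ 2) := by
      intro x
      have himg : (fun y => fhat f p x y z) =
          (fun y => fhat f p x y z' + (p / 2 * ‖x - z‖ ^ 2 - p / 2 * ‖x - z'‖ ^ 2)) := by
        funext y; simp only [fhat]; ring
      rw [himg]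
      exact sSup_image_add_const hYne hYcomp (hcont x z') _
    set x₁ := xstarz z with hx₁
    set x₂ := xstarz z' with hx₂
    have hA := hqg z x₂
    have hB := hqg z' x₁
    rw [hshift x₁, hshift x₂] at hA
    have hid := four_norm_identity x₁ x₂ z z'
    have hin := real_inner_le_norm (x₂ - x₁) (z' - z)
    rw [norm_sub_rev x₂ x₁, norm_sub_rev z' z] at hin
    rw [norm_sub_rev x₂ x₁] at hA
    have hkey : (p - l) * ‖x₁ - x₂‖ ^ 2 ≤ p * (‖z - z'‖ * ‖x₁ - x₂‖) := by
      nlinarith [hA, hB, hid, hin]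
    rcases eq_or_lt_of_le (norm_nonneg (x₁ - x₂)) with h0 | h0
    · rw [← h0]
      exact mul_nonneg (div_nonneg (by linarith) hμ.le) (norm_nonneg _)
    · have hd2 : (p - l) * ‖x₁ - x₂‖ ≤ p * ‖z - z'‖ :=
        le_of_mul_le_mul_right (by nlinarith [hkey]) h0
      rw [div_mul_eq_mul_div, le_div_iff₀ hμ]
      nlinarith
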